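/- arXiv:2304.14558 — 2 statements merged into one kernel-verified Lean document; each statement's English description precedes it below -/
import Mathlib

section
/- If R is a normalized transfer operator for σ acting on L²(μ), then μ is strongly invariant with respect to (R, σ) — i.e. μ is σ-invariant and μR = μ — if and only if the adjoint satisfies R*(𝟙) = 𝟙. -/
open MeasureTheory

/-- For a normalized transfer operator R acting on L²(μ), the measure μ is
    strongly invariant (σ-invariant and μR = μ) iff R*(𝟙) = 𝟙. -/
theorem strongly_invariant_iff_adjoint_one {X : Type*} [MeasurableSpace X]
    (μ : Measure X) [IsProbabilityMeasure μ] (σ : X → X) (hσ : Measurable σ)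
    (R : (X → ℝ) →ₗ[ℝ] (X → ℝ))
    (hpos : ∀ f : X → ℝ, 0 ≤ f → 0 ≤ R f)
    (hpull : ∀ f g : X → ℝ, R (fun x => f (σ x) * g x) = fun x => f x * R g x)
    (hnorm : R (fun _ => (1 : ℝ)) = fun _ => (1 : ℝ))
    (hL2 : ∀ f : X → ℝ, MemLp f 2 μ → MemLp (R f) 2 μ)
    (Rstar : (X → ℝ) → (X → ℝ))
    (hadj : ∀ f g : X → ℝ, MemLp f 2 μ → MemLp g 2 μ →
      ∫ x, R f x * g x ∂μ = ∫ x, f x * Rstar g x ∂μ) :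
    (μ.map σ = μ ∧ ∀ f : X → ℝ, MemLp f 2 μ → ∫ x, R f x ∂μ = ∫ x, f x ∂μ) ↔
      Rstar (fun _ => (1 : ℝ)) =ᵐ[μ] fun _ => (1 : ℝ) := by
  have h1 : MemLp (fun _ : X => (1 : ℝ)) 2 μ := memLp_const 1
  set u : X → ℝ := Rstar (fun _ => (1 : ℝ)) with hu
  constructor
  · rintro ⟨hmap, hint⟩
    have key : ∀ f : X → ℝ, MemLp f 2 μ →
        ∫ x, f x * u x ∂μ = ∫ x, f x ∂μ := by
      intro f hf
      calc ∫ x, f x * u x ∂μ = ∫ x, R f x * 1 ∂μ := (hadj f _ hf h1).symm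
        _ = ∫ x, R f x ∂μ := by simp
        _ = ∫ x, f x ∂μ := hint f hf
    have hu_int : Integrable u μ := by
      by_contra h
      have h2 := key _ h1
      simp only [one_mul] at h2
      rw [integral_undef h] at h2
      simp at h2
    set u' : X → ℝ := (hu_int.aestronglyMeasurable.mk u) with hu'
    have hu'm : Measurable u' := hu_int.aestronglyMeasurable.stronglyMeasurable_mk.measurable
    have huu' : u =ᵐ[μ] u' := hu_int.aestronglyMeasurable.ae_eq_mk
    set f : X → ℝ := fun x => if 1 ≤ u' x then 1 else -1 with hfd
    have hfm : Measurable f :=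
      Measurable.ite (measurableSet_le measurable_const hu'm) measurable_const measurable_const
    have hfb : ∀ x, ‖f x‖ ≤ 1 := by
      intro x
      simp only [hfd]
      split_ifs <;> simp
    have hf2 : MemLp f 2 μ :=
      MemLp.of_bound hfm.aestronglyMeasurable 1 (Filter.Eventually.of_forall hfb)
    have hf_int : Integrable f μ :=
      hf2.integrable (by norm_num)
    have hfu_int : Integrable (fun x => f x * u x) μ :=
      hu_int.bdd_mul hfm.aestronglyMeasurable (Filter.Eventually.of_forall hfb)
    have hsub : ∫ x, (f x * u x - f x) ∂μ = 0 := by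
      rw [integral_sub hfu_int hf_int, key f hf2, sub_self]
    have habs : (fun x => f x * u x - f x) =ᵐ[μ] fun x => |u x - 1| := by
      filter_upwards [huu'] with x hx
      have : f x * u x - f x = f x * (u x - 1) := by ring
      rw [this]
      by_cases h : 1 ≤ u' x
      · have : 0 ≤ u x - 1 := by rw [hx]; linarith
        simp [hfd, h, abs_of_nonneg this]
      · have : u x - 1 < 0 := by rw [hx]; push_neg at h; linarith
        simp [hfd, h, abs_of_neg this]
    have habs_int : Integrable (fun x => |u x - 1|) μ :=
      (hu_int.sub (integrable_const 1)).abs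
    have hzero : ∫ x, |u x - 1| ∂μ = 0 := by
      rw [← integral_congr_ae habs, hsub]
    have := (integral_eq_zero_iff_of_nonneg (fun x => abs_nonneg _) habs_int).mp hzero
    filter_upwards [this] with x hx
    have : |u x - 1| = 0 := hx
    have : u x - 1 = 0 := abs_eq_zero.mp this
    simpa using by linarith
  · intro h
    have hb : ∀ f : X → ℝ, MemLp f 2 μ → ∫ x, R f x ∂μ = ∫ x, f x ∂μ := by
      intro f hf
      calc ∫ x, R f x ∂μ = ∫ x, R f x * 1 ∂μ := by simp
        _ = ∫ x, f x * u x ∂μ := hadj f _ hf h1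
        _ = ∫ x, f x * 1 ∂μ := by
            refine integral_congr_ae ?_
            filter_upwards [h] with x hx
            rw [hx]
        _ = ∫ x, f x ∂μ := by simp
    refine ⟨?_, hb⟩
    ext A hA
    rw [Measure.map_apply hσ hA]
    set iA : X → ℝ := A.indicator 1 with hiA
    have hiAm : Measurable iA := measurable_one.indicator hA
    set g : X → ℝ := fun x => iA (σ x) with hg
    have hgm : Measurable g := hiAm.comp hσ
    have hRg : R g = iA := by
      have h2 := hpull iA (fun _ => (1 : ℝ))
      rw [hnorm] at h2
      simp only [mul_one] at h2
      exact h2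
    have hgb : ∀ x, ‖g x‖ ≤ 1 := by
      intro x
      simp only [hg, hiA, Set.indicator]
      split_ifs <;> simp
    have hg2 : MemLp g 2 μ :=
      MemLp.of_bound hgm.aestronglyMeasurable 1 (Filter.Eventually.of_forall hgb)
    have hbg := hb g hg2
    rw [hRg] at hbg
    have h3 : ∫ x, iA x ∂μ = (μ A).toReal := by
      rw [hiA]
      exact integral_indicator_one hA
    have h4 : ∫ x, g x ∂μ = (μ (σ ⁻¹' A)).toReal := by
      rw [hg]
      have : ∫ x, iA (σ x) ∂μ = ∫ y, iA y ∂(μ.map σ) :=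
        (integral_map hσ.aemeasurable hiAm.aestronglyMeasurable).symm
      rw [this, hiA, integral_indicator_one hA, measureReal_def, Measure.map_apply hσ hA]
    rw [h3, h4] at hbg
    exact (ENNReal.toReal_eq_toReal_iff' (measure_ne_top μ _) (measure_ne_top μ _)).mp hbg.symm
end

section
/- Let φ ≥ 0 be Markovian for (σ, μ) and m measurable with m√φ·(f∘σ) ∈ L²(μ) for f ∈ L²(μ). Then T_m(f) = m√φ(f∘σ) is an isometry on L²(μ) if and only if S_φ*(√φ · |m|²) = 𝟙, where S_φ(f) = √φ(f∘σ) and S_φ* is its adjoint. -/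
open MeasureTheory
open scoped ENNReal NNReal

lemma aux_eLpNorm_two {X : Type*} [MeasurableSpace X] (μ : Measure X) (f : X → ℂ) :
    eLpNorm f 2 μ = (∫⁻ x, ENNReal.ofReal (‖f x‖ ^ 2) ∂μ) ^ (1/2 : ℝ) := by
  rw [eLpNorm_eq_lintegral_rpow_enorm_toReal two_ne_zero ENNReal.ofNat_ne_top]
  norm_num

lemma aux_eLpNorm_eq_iff {X : Type*} [MeasurableSpace X] (μ : Measure X) (f g : X → ℂ) :
    eLpNorm f 2 μ = eLpNorm g 2 μ ↔
      ∫⁻ x, ENNReal.ofReal (‖f x‖ ^ 2) ∂μ = ∫⁻ x, ENNReal.ofReal (‖g x‖ ^ 2) ∂μ := by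
  rw [aux_eLpNorm_two, aux_eLpNorm_two]
  constructor
  · intro h
    have := congrArg (fun z : ℝ≥0∞ => z ^ (2:ℝ)) h
    simp only [← ENNReal.rpow_mul] at this
    norm_num at this
    simpa using this
  · intro h; rw [h]

/-- T_m(f) = m√φ(f∘σ) is an isometry on L²(μ) iff S_φ*(√φ·|m|²) = 𝟙. -/
theorem weighted_composition_isometry_iff {X : Type*} [MeasurableSpace X]
    (μ : Measure X) [IsProbabilityMeasure μ] (σ : X → X) (hσ : Measurable σ)
    (hsurj : Function.Surjective σ)
    (φ : X → ℝ) (hφmeas : Measurable φ) (hφpos : 0 ≤ φ)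
    (hmark : ∀ f : X → ℝ, Integrable f μ →
      ∫ x, f (σ x) * φ x ∂μ = ∫ x, f x ∂μ)
    (Sstar : (X → ℂ) → (X → ℂ))
    (hSstar : ∀ g : X → ℂ, MemLp g 2 μ → MemLp (Sstar g) 2 μ)
    (hadj : ∀ f g : X → ℂ, MemLp f 2 μ → MemLp g 2 μ →
      ∫ x, (starRingEnd ℂ) (g x) * ((Real.sqrt (φ x) : ℂ) * f (σ x)) ∂μ
        = ∫ x, (starRingEnd ℂ) (Sstar g x) * f x ∂μ)
    (m : X → ℂ) (hm : Measurable m) (hmbd : ∃ C, ∀ x, ‖m x‖ ≤ C) :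
    (∀ f : X → ℂ, MemLp f 2 μ →
        eLpNorm (fun x => m x * (Real.sqrt (φ x) : ℂ) * f (σ x)) 2 μ
          = eLpNorm f 2 μ) ↔
      Sstar (fun x => ((Real.sqrt (φ x) * ‖m x‖ ^ 2 : ℝ) : ℂ))
        =ᵐ[μ] fun _ => (1 : ℂ) := by
  classical
  have hne : Nonempty X := by
    by_contra h
    rw [not_nonempty_iff] at h
    have h1 : (μ Set.univ) = 1 := measure_univ
    rw [Set.univ_eq_empty_iff.2 h] at h1
    simp at h1
  obtain ⟨C, hC⟩ := hmbd
  have hC0 : 0 ≤ C := le_trans (norm_nonneg _) (hC (Classical.arbitrary X))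
  have hφ1 : ∫ x, φ x ∂μ = 1 := by
    have := hmark (fun _ => 1) (integrable_const 1)
    simpa using this
  have hφint : Integrable φ μ := by
    by_contra h
    rw [integral_undef h] at hφ1
    exact one_ne_zero hφ1.symm
  set w : X → ℝ := fun x => φ x * ‖m x‖ ^ 2 with hw
  have hwmeas : Measurable w := hφmeas.mul (hm.norm.pow_const 2)
  have hwnn : ∀ x, 0 ≤ w x := fun x => mul_nonneg (hφpos x) (by positivity)
  have hwint : Integrable w μ := by
    apply Integrable.mono' (hφint.const_mul (C ^ 2)) hwmeas.aestronglyMeasurable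
    filter_upwards with x
    rw [Real.norm_eq_abs, abs_of_nonneg (hwnn x)]
    calc w x = φ x * ‖m x‖ ^ 2 := rfl
      _ ≤ φ x * C ^ 2 := by
          apply mul_le_mul_of_nonneg_left _ (hφpos x)
          exact pow_le_pow_left₀ (norm_nonneg _) (hC x) 2
      _ = C ^ 2 * φ x := mul_comm _ _
  set G : X → ℂ := fun x => ((Real.sqrt (φ x) * ‖m x‖ ^ 2 : ℝ) : ℂ) with hG
  have hGmeas : Measurable G :=
    Complex.measurable_ofReal.comp ((hφmeas.sqrt).mul (hm.norm.pow_const 2))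
  have hGmem : MemLp G 2 μ := by
    rw [memLp_two_iff_integrable_sq_norm hGmeas.aestronglyMeasurable]
    apply Integrable.mono' (hφint.const_mul (C ^ 4)) ((hGmeas.norm.pow_const 2).aestronglyMeasurable)
    filter_upwards with x
    rw [Real.norm_eq_abs, abs_of_nonneg (by positivity)]
    have h1 : ‖G x‖ = Real.sqrt (φ x) * ‖m x‖ ^ 2 := by
      rw [hG]
      simp only [Complex.norm_real, Real.norm_eq_abs]
      exact abs_of_nonneg (by positivity)
    rw [h1, mul_pow, Real.sq_sqrt (hφpos x)]
    calc φ x * (‖m x‖ ^ 2) ^ 2 ≤ φ x * C ^ 4 := by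
          apply mul_le_mul_of_nonneg_left _ (hφpos x)
          calc (‖m x‖ ^ 2) ^ 2 = ‖m x‖ ^ 4 := by ring
            _ ≤ C ^ 4 := pow_le_pow_left₀ (norm_nonneg _) (hC x) 4
      _ = C ^ 4 * φ x := mul_comm _ _
  have hkey : ∀ h : X → ℂ, MemLp h 2 μ →
      ∫ x, ((w x : ℝ) : ℂ) * h (σ x) ∂μ
        = ∫ x, (starRingEnd ℂ) (Sstar G x) * h x ∂μ := by
    intro h hh
    rw [← hadj h G hh hGmem]
    apply integral_congr_ae
    filter_upwards with x
    simp only [hG, Complex.conj_ofReal]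
    have hs : (Real.sqrt (φ x) : ℂ) * (Real.sqrt (φ x) : ℂ) = (φ x : ℂ) := by
      rw [← Complex.ofReal_mul, Real.mul_self_sqrt (hφpos x)]
    have : (φ x : ℂ) = (Real.sqrt (φ x) : ℂ) * (Real.sqrt (φ x) : ℂ) := by
      rw [← Complex.ofReal_mul, Real.mul_self_sqrt (hφpos x)]
    rw [hw]
    push_cast
    rw [this]
    ring
  -- lintegral finiteness of w
  have hwlint : ∫⁻ x, ENNReal.ofReal (w x) ∂μ < ⊤ := hwint.lintegral_lt_top
  have hconv : ∀ u : X → ℝ, (∀ x, 0 ≤ u x) → Integrable u μ →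
      ∫ x, ((u x : ℝ) : ℂ) ∂μ = (((∫⁻ x, ENNReal.ofReal (u x) ∂μ).toReal : ℝ) : ℂ) := by
    intro u hnn hint
    rw [← integral_eq_lintegral_of_nonneg_ae
      (Filter.Eventually.of_forall hnn) hint.aestronglyMeasurable]
    exact integral_ofReal
  constructor
  · -- forward
    intro hiso
    have hconjint : Integrable (fun x => (starRingEnd ℂ) (Sstar G x)) μ := by
      have h1 : Integrable (Sstar G) μ := (hSstar G hGmem).integrable one_le_two
      refine ⟨Complex.continuous_conj.comp_aestronglyMeasurable h1.1, h1.2.mono ?_⟩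
      filter_upwards with x
      simp
    have hae : (fun x => (starRingEnd ℂ) (Sstar G x)) =ᵐ[μ] fun _ => (1 : ℂ) := by
      apply Integrable.ae_eq_of_forall_setIntegral_eq _ _ hconjint (integrable_const 1)
      intro A hA _
      set ind : X → ℝ := A.indicator (fun _ => (1:ℝ)) with hind
      have hindmeas : Measurable ind := measurable_const.indicator hA
      have hindnn : ∀ x, 0 ≤ ind x := fun x => Set.indicator_nonneg (fun _ _ => zero_le_one) x
      have hindle : ∀ x, ind x ≤ 1 := fun x => by
        by_cases hx : x ∈ A <;> simp [hind, hx]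
      have hindint : Integrable ind μ := (integrable_const (1:ℝ)).indicator hA
      have hindC : MemLp (fun x => ((ind x : ℝ) : ℂ)) 2 μ := by
        apply MemLp.of_bound
          ((show Measurable fun x => ((ind x : ℝ) : ℂ) from
            Complex.measurable_ofReal.comp hindmeas).aestronglyMeasurable) 1
        filter_upwards with x
        simp only [Complex.norm_real, Real.norm_eq_abs]
        rw [abs_of_nonneg (hindnn x)]
        exact hindle x
      have hk := hkey _ hindC
      have h2 : ∫ x, (starRingEnd ℂ) (Sstar G x) * ((ind x : ℝ) : ℂ) ∂μ
          = ∫ x in A, (starRingEnd ℂ) (Sstar G x) ∂μ := by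
        rw [← integral_indicator hA]
        congr 1
        funext x
        by_cases hx : x ∈ A <;> simp [hind, hx]
      have hintwind : Integrable (fun x => w x * ind (σ x)) μ := by
        apply Integrable.mono' hwint
          ((show Measurable fun x => w x * ind (σ x) from
            hwmeas.mul (hindmeas.comp hσ)).aestronglyMeasurable)
        filter_upwards with x
        rw [Real.norm_eq_abs, abs_of_nonneg (mul_nonneg (hwnn x) (hindnn _))]
        calc w x * ind (σ x) ≤ w x * 1 := mul_le_mul_of_nonneg_left (hindle _) (hwnn x)
          _ = w x := mul_one _
      have h3 : ∫ x, ((w x : ℝ) : ℂ) * ((ind (σ x) : ℝ) : ℂ) ∂μ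
          = (((∫⁻ x, ENNReal.ofReal (w x * ind (σ x)) ∂μ).toReal : ℝ) : ℂ) := by
        simp_rw [← Complex.ofReal_mul]
        exact hconv _ (fun x => mul_nonneg (hwnn x) (hindnn _)) hintwind
      have hisoA := (aux_eLpNorm_eq_iff μ _ _).1
        (hiso (A.indicator (fun _ => (1:ℂ))) ((memLp_const (1:ℂ)).indicator hA))
      have hnormsq : ∀ x, ‖m x * ((Real.sqrt (φ x) : ℝ) : ℂ)‖ ^ 2 = w x := by
        intro x
        rw [norm_mul, mul_pow, Complex.norm_real,
          Real.norm_eq_abs, abs_of_nonneg (Real.sqrt_nonneg _), Real.sq_sqrt (hφpos x), hw]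
        ring
      have hL : (∫⁻ x, ENNReal.ofReal
            (‖m x * ((Real.sqrt (φ x) : ℝ) : ℂ) * (A.indicator (fun _ => (1:ℂ)) (σ x))‖ ^ 2) ∂μ)
          = ∫⁻ x, ENNReal.ofReal (w x * ind (σ x)) ∂μ := by
        apply lintegral_congr
        intro x
        by_cases hx : σ x ∈ A
        · simp only [hind, Set.indicator_of_mem hx, mul_one]
          rw [hnormsq x]
        · simp [hind, Set.indicator_of_notMem hx]
      have hR : (∫⁻ x, ENNReal.ofReal (‖(A.indicator (fun _ => (1:ℂ)) x)‖ ^ 2) ∂μ)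
          = ∫⁻ x, ENNReal.ofReal (ind x) ∂μ := by
        apply lintegral_congr
        intro x
        by_cases hx : x ∈ A <;> simp [hind, hx]
      rw [← h2, ← hk, h3]
      rw [hL] at hisoA
      rw [hR] at hisoA
      rw [hisoA, ← hconv ind hindnn hindint]
      rw [← integral_indicator hA]
      congr 1
      funext x
      by_cases hx : x ∈ A <;> simp [hind, hx]
    filter_upwards [hae] with x hx
    have := congrArg (starRingEnd ℂ) hx
    simpa using this
  · -- backward
    intro hSG f hf
    -- measurable representative
    have hff' : f =ᵐ[μ] hf.1.mk f := hf.1.ae_eq_mk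
    set f' : X → ℂ := hf.1.mk f with hf'def
    have hf'sm : StronglyMeasurable f' := hf.1.stronglyMeasurable_mk
    have hf'meas : Measurable f' := hf'sm.measurable
    obtain ⟨N, hNsub, hNmeas, hNnull⟩ :=
      exists_measurable_superset_of_null (ae_iff.1 hff')
    have hNf : ∀ x ∉ N, f x = f' x := by
      intro x hx
      by_contra h
      exact hx (hNsub h)
    -- pullback of the null set
    have hpull : ∀ᵐ x ∂μ, σ x ∈ N → φ x = 0 := by
      have hindint : Integrable (N.indicator fun _ => (1:ℝ)) μ :=
        (integrable_const (1:ℝ)).indicator hNmeas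
      have hintc : Integrable (fun x => (N.indicator (fun _ => (1:ℝ)) (σ x)) * φ x) μ := by
        apply Integrable.mono'
          hφint
          ((show Measurable fun x => (N.indicator (fun _ => (1:ℝ)) (σ x)) * φ x from
            ((measurable_const.indicator hNmeas).comp hσ).mul hφmeas).aestronglyMeasurable)
        filter_upwards with x
        have h1 : 0 ≤ N.indicator (fun _ => (1:ℝ)) (σ x) :=
          Set.indicator_nonneg (fun _ _ => zero_le_one) _
        have h2 : N.indicator (fun _ => (1:ℝ)) (σ x) ≤ 1 := by
          by_cases hx : σ x ∈ N <;> simp [hx]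
        rw [Real.norm_eq_abs, abs_of_nonneg (mul_nonneg h1 (hφpos x))]
        calc N.indicator (fun _ => (1:ℝ)) (σ x) * φ x ≤ 1 * φ x :=
              mul_le_mul_of_nonneg_right h2 (hφpos x)
          _ = φ x := one_mul _
      have h0 : ∫ x, (N.indicator (fun _ => (1:ℝ)) (σ x)) * φ x ∂μ = 0 := by
        rw [hmark _ hindint]
        rw [integral_indicator_const _ hNmeas]
        simp [hNnull, Measure.real]
      have hz := (integral_eq_zero_iff_of_nonneg
        (fun x => mul_nonneg (Set.indicator_nonneg (fun _ _ => zero_le_one) _) (hφpos x))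
        hintc).1 h0
      filter_upwards [hz] with x hx hσx
      simp only [Pi.zero_apply] at hx
      rw [Set.indicator_of_mem hσx, one_mul] at hx
      exact hx
    -- replace f by f' in the goal
    have heq2 : (fun x => m x * ((Real.sqrt (φ x) : ℝ) : ℂ) * f (σ x))
        =ᵐ[μ] fun x => m x * ((Real.sqrt (φ x) : ℝ) : ℂ) * f' (σ x) := by
      filter_upwards [hpull] with x hx
      by_cases hσx : σ x ∈ N
      · rw [hx hσx]
        simp
      · rw [hNf _ hσx]
    rw [eLpNorm_congr_ae heq2, eLpNorm_congr_ae hff', aux_eLpNorm_eq_iff]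
    set v : X → ℝ := fun x => ‖f' x‖ ^ 2 with hv
    have hvmeas : Measurable v := hf'meas.norm.pow_const 2
    have hvnn : ∀ x, 0 ≤ v x := fun x => by positivity
    have hsup : ∀ x, (⨆ n : ℕ, ENNReal.ofReal (min (v x) n)) = ENNReal.ofReal (v x) := by
      intro x
      apply le_antisymm
      · exact iSup_le fun n => ENNReal.ofReal_le_ofReal (min_le_left _ _)
      · obtain ⟨n, hn⟩ := exists_nat_ge (v x)
        calc ENNReal.ofReal (v x) = ENNReal.ofReal (min (v x) n) := by rw [min_eq_left hn]
          _ ≤ ⨆ n : ℕ, ENNReal.ofReal (min (v x) n) :=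
              le_iSup (fun n : ℕ => ENNReal.ofReal (min (v x) (n:ℝ))) n
    have hkey2 : ∀ n : ℕ,
        ∫⁻ x, ENNReal.ofReal (w x) * ENNReal.ofReal (min (v (σ x)) n) ∂μ
          = ∫⁻ x, ENNReal.ofReal (min (v x) n) ∂μ := by
      intro n
      set h : X → ℝ := fun x => min (v x) n with hh
      have hhmeas : Measurable h := hvmeas.min measurable_const
      have hhnn : ∀ x, 0 ≤ h x := fun x => le_min (hvnn x) (Nat.cast_nonneg n)
      have hhbd : ∀ x, h x ≤ n := fun x => min_le_right _ _
      have hhmem : MemLp (fun x => ((h x : ℝ) : ℂ)) 2 μ := by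
        apply MemLp.of_bound
          ((show Measurable fun x => ((h x : ℝ) : ℂ) from
            Complex.measurable_ofReal.comp hhmeas).aestronglyMeasurable) (n : ℝ)
        filter_upwards with x
        simp only [Complex.norm_real, Real.norm_eq_abs]
        rw [abs_of_nonneg (hhnn x)]
        exact hhbd x
      have hintw : Integrable (fun x => w x * h (σ x)) μ := by
        apply Integrable.mono' (hwint.const_mul (n : ℝ))
          ((show Measurable fun x => w x * h (σ x) from
            hwmeas.mul (hhmeas.comp hσ)).aestronglyMeasurable)
        filter_upwards with x
        rw [Real.norm_eq_abs, abs_of_nonneg (mul_nonneg (hwnn x) (hhnn _))]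
        calc w x * h (σ x) ≤ w x * n := mul_le_mul_of_nonneg_left (hhbd _) (hwnn x)
          _ = (n : ℝ) * w x := mul_comm _ _
      have hinth : Integrable h μ := by
        apply Integrable.mono' (integrable_const (n : ℝ)) hhmeas.aestronglyMeasurable
        filter_upwards with x
        rw [Real.norm_eq_abs, abs_of_nonneg (hhnn x)]
        exact hhbd x
      have hkk := hkey _ hhmem
      have hR1 : ∫ x, (starRingEnd ℂ) (Sstar G x) * ((h x : ℝ) : ℂ) ∂μ
          = ∫ x, ((h x : ℝ) : ℂ) ∂μ := by
        apply integral_congr_ae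
        filter_upwards [hSG] with x hx
        rw [hG] at hx
        rw [hx]
        simp
      have e1 : ∫ x, ((w x : ℝ) : ℂ) * ((h (σ x) : ℝ) : ℂ) ∂μ
          = (((∫⁻ x, ENNReal.ofReal (w x * h (σ x)) ∂μ).toReal : ℝ) : ℂ) := by
        simp_rw [← Complex.ofReal_mul]
        exact hconv _ (fun x => mul_nonneg (hwnn x) (hhnn _)) hintw
      have e2 : ∫ x, ((h x : ℝ) : ℂ) ∂μ
          = (((∫⁻ x, ENNReal.ofReal (h x) ∂μ).toReal : ℝ) : ℂ) := hconv _ hhnn hinth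
      have e3 : (∫⁻ x, ENNReal.ofReal (w x * h (σ x)) ∂μ).toReal
          = (∫⁻ x, ENNReal.ofReal (h x) ∂μ).toReal := by
        have := (hkk.trans hR1)
        rw [e1, e2] at this
        exact_mod_cast this
      have e4 := (ENNReal.toReal_eq_toReal_iff' hintw.lintegral_lt_top.ne
        hinth.lintegral_lt_top.ne).1 e3
      calc ∫⁻ x, ENNReal.ofReal (w x) * ENNReal.ofReal (min (v (σ x)) n) ∂μ
          = ∫⁻ x, ENNReal.ofReal (w x * h (σ x)) ∂μ := by
            apply lintegral_congr
            intro x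
            rw [ENNReal.ofReal_mul (hwnn x)]
        _ = ∫⁻ x, ENNReal.ofReal (h x) ∂μ := e4
    -- monotone convergence
    have hmono : Monotone fun (n : ℕ) (x : X) =>
        ENNReal.ofReal (w x) * ENNReal.ofReal (min (v (σ x)) n) := by
      intro i j hij x
      apply mul_le_mul_right
      apply ENNReal.ofReal_le_ofReal
      exact min_le_min le_rfl (Nat.cast_le.2 hij)
    have hmono2 : Monotone fun (n : ℕ) (x : X) => ENNReal.ofReal (min (v x) n) := by
      intro i j hij x
      apply ENNReal.ofReal_le_ofReal
      exact min_le_min le_rfl (Nat.cast_le.2 hij)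
    have hmeas1 : ∀ n : ℕ, Measurable fun x =>
        ENNReal.ofReal (w x) * ENNReal.ofReal (min (v (σ x)) n) :=
      fun n => (hwmeas.ennreal_ofReal).mul
        (((hvmeas.comp hσ).min measurable_const).ennreal_ofReal)
    have hmeas2 : ∀ n : ℕ, Measurable fun x => ENNReal.ofReal (min (v x) n) :=
      fun n => (hvmeas.min measurable_const).ennreal_ofReal
    have hLpt : ∀ x, ENNReal.ofReal (‖m x * ((Real.sqrt (φ x) : ℝ) : ℂ) * f' (σ x)‖ ^ 2)
        = ENNReal.ofReal (w x) * ENNReal.ofReal (v (σ x)) := by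
      intro x
      rw [← ENNReal.ofReal_mul (hwnn x)]
      congr 1
      rw [norm_mul, mul_pow, hv]
      simp only
      rw [norm_mul, mul_pow, Complex.norm_real,
        Real.norm_eq_abs, abs_of_nonneg (Real.sqrt_nonneg _), Real.sq_sqrt (hφpos x), hw]
      ring
    calc ∫⁻ x, ENNReal.ofReal (‖m x * ((Real.sqrt (φ x) : ℝ) : ℂ) * f' (σ x)‖ ^ 2) ∂μ
        = ∫⁻ x, ENNReal.ofReal (w x) * ENNReal.ofReal (v (σ x)) ∂μ := lintegral_congr hLpt
      _ = ∫⁻ x, ⨆ n : ℕ, ENNReal.ofReal (w x) * ENNReal.ofReal (min (v (σ x)) n) ∂μ := by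
          apply lintegral_congr
          intro x
          rw [← ENNReal.mul_iSup, hsup (σ x)]
      _ = ⨆ n : ℕ, ∫⁻ x, ENNReal.ofReal (w x) * ENNReal.ofReal (min (v (σ x)) n) ∂μ :=
          lintegral_iSup hmeas1 hmono
      _ = ⨆ n : ℕ, ∫⁻ x, ENNReal.ofReal (min (v x) n) ∂μ := by
          exact iSup_congr hkey2
      _ = ∫⁻ x, ⨆ n : ℕ, ENNReal.ofReal (min (v x) n) ∂μ := (lintegral_iSup hmeas2 hmono2).symm
      _ = ∫⁻ x, ENNReal.ofReal (v x) ∂μ := by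
          apply lintegral_congr
          intro x
          rw [hsup x]
      _ = ∫⁻ x, ENNReal.ofReal (‖f' x‖ ^ 2) ∂μ := by rw [hv]
end
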